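/- arXiv:1303.3500 — 4 statements merged into one kernel-verified Lean document; each statement's English description precedes it below -/
import Mathlib

section
/- Let u, v be coprime integers such that 5 divides u^2 + 11uv - v^2. Then the 5-adic valuation of u^2 + 11uv - v^2 is exactly 2 or exactly 3. -/
theorem stmt_1 (u v : ℤ) (huv : IsCoprime u v)
    (hdvd : (5 : ℤ) ∣ u ^ 2 + 11 * u * v - v ^ 2) :
    padicValInt 5 (u ^ 2 + 11 * u * v - v ^ 2) = 2 ∨
      padicValInt 5 (u ^ 2 + 11 * u * v - v ^ 2) = 3 := by
  haveI : Fact (Nat.Prime 5) := ⟨by norm_num⟩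
  have hp : Prime (5 : ℤ) := by norm_num
  -- 5 ∤ v
  have hv : ¬ (5 : ℤ) ∣ v := by
    intro h5v
    have h5u : (5 : ℤ) ∣ u := by
      have : (5 : ℤ) ∣ u ^ 2 := by
        have : u ^ 2 = (u ^ 2 + 11 * u * v - v ^ 2) - 11 * u * v + v ^ 2 := by ring
        rw [this]
        exact dvd_add (dvd_sub hdvd (h5v.mul_left (11 * u)))
          (by rw [sq]; exact h5v.mul_left v)
      exact hp.dvd_of_dvd_pow this
    obtain ⟨a, b, hab⟩ := huv
    have : (5 : ℤ) ∣ 1 := hab ▸ dvd_add (Dvd.dvd.mul_left h5u a) (Dvd.dvd.mul_left h5v b)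
    norm_num at this
  -- 5 ∣ u - 2v
  have hsq : (5 : ℤ) ∣ (u - 2 * v) ^ 2 := by
    have : (u - 2 * v) ^ 2 = (u ^ 2 + 11 * u * v - v ^ 2) + 5 * (v ^ 2 - 3 * u * v) := by ring
    rw [this]
    exact dvd_add hdvd (dvd_mul_right 5 _)
  obtain ⟨t, ht⟩ := hp.dvd_of_dvd_pow hsq
  have hu : u = 2 * v + 5 * t := by linarith
  set M : ℤ := v ^ 2 + 3 * v * t + t ^ 2 with hM
  have hN : u ^ 2 + 11 * u * v - v ^ 2 = 25 * M := by rw [hu, hM]; ring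
  -- 25 ∤ M
  have h25M : ¬ (25 : ℤ) ∣ M := by
    intro h25
    have h5M : (5 : ℤ) ∣ M := dvd_trans (by norm_num) h25
    have hvt : (5 : ℤ) ∣ v - t := by
      apply hp.dvd_of_dvd_pow (n := 2)
      have : (v - t) ^ 2 = M - 5 * (v * t) := by rw [hM]; ring
      rw [this]
      exact dvd_sub h5M (dvd_mul_right 5 _)
    obtain ⟨s, hs⟩ := hvt
    have hv5 : v = t + 5 * s := by linarith
    have : (25 : ℤ) ∣ 5 * t ^ 2 := by
      have : 5 * t ^ 2 = M - 25 * (t * s + s ^ 2) := by rw [hM, hv5]; ring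
      rw [this]
      exact dvd_sub h25 (dvd_mul_right 25 _)
    have h5t : (5 : ℤ) ∣ t := by
      obtain ⟨c, hc⟩ := this
      exact hp.dvd_of_dvd_pow (n := 2) ⟨c, by linarith⟩
    exact hv (hv5 ▸ dvd_add h5t (dvd_mul_right 5 s))
  have hMne : M ≠ 0 := fun h => h25M (h ▸ dvd_zero 25)
  have hNne : u ^ 2 + 11 * u * v - v ^ 2 ≠ 0 := by
    rw [hN]; exact mul_ne_zero (by norm_num) hMne
  have h2 : 2 ≤ padicValInt 5 (u ^ 2 + 11 * u * v - v ^ 2) := by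
    have := (padicValInt_dvd_iff (p := 5) 2 (u ^ 2 + 11 * u * v - v ^ 2)).mp
      (by rw [hN]; norm_num)
    tauto
  have h3 : ¬ 4 ≤ padicValInt 5 (u ^ 2 + 11 * u * v - v ^ 2) := by
    intro h4
    have : ((5 : ℕ) : ℤ) ^ 4 ∣ u ^ 2 + 11 * u * v - v ^ 2 :=
      (padicValInt_dvd_iff (p := 5) 4 _).mpr (Or.inr h4)
    rw [hN] at this
    apply h25M
    have h625 : (625 : ℤ) ∣ 25 * M := by norm_num at this ⊢; exact this
    obtain ⟨c, hc⟩ := h625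
    exact ⟨c, by linarith⟩
  omega
end

section
/- Let K be a field and d ∈ K with d(d^2 + 11d - 1) ≠ 0. On the elliptic curve E_d : y^2 + (d+1)xy + dy = x^3 + dx^2, the point P = (0,0) satisfies 2·P = (-d, d^2), and P has order exactly 5 in the group E_d(K). -/
open WeierstrassCurve.Affine

private lemma some_eq_some' {F : Type*} [Field F] {W : WeierstrassCurve.Affine F}
    {x y x' y' : F} (h : W.Nonsingular x y) (hx : x = x') (hy : y = y')
    (h' : W.Nonsingular x' y') : Point.some _ _ h = Point.some _ _ h' := by
  subst hx; subst hy; rfl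

open Classical in
theorem stmt_4 {K : Type*} [Field K] (d : K) (hd : d * (d ^ 2 + 11 * d - 1) ≠ 0)
    (E : WeierstrassCurve.Affine K) (hE : E = ⟨d + 1, d, d, 0, 0⟩)
    (h00 : E.Nonsingular 0 0) (h2 : E.Nonsingular (-d) (d ^ 2)) :
    2 • (WeierstrassCurve.Affine.Point.some _ _ h00) = WeierstrassCurve.Affine.Point.some _ _ h2 ∧
      addOrderOf (WeierstrassCurve.Affine.Point.some _ _ h00) = 5 := by
  have hd0 : d ≠ 0 := left_ne_zero_of_mul hd
  subst hE
  generalize hW : (⟨d + 1, d, d, 0, 0⟩ : WeierstrassCurve.Affine K) = W at *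
  change WeierstrassCurve.Affine K at W
  have ha1 : W.a₁ = d + 1 := by subst hW; rfl
  have ha2 : W.a₂ = d := by subst hW; rfl
  have ha3 : W.a₃ = d := by subst hW; rfl
  have ha4 : W.a₄ = 0 := by subst hW; rfl
  -- negY computations
  have hneg00 : W.negY 0 0 = -d := by simp [WeierstrassCurve.Affine.negY, ha1, ha3]
  have hnegQ : W.negY (-d) (d ^ 2) = 0 := by
    simp [WeierstrassCurve.Affine.negY, ha1, ha3]; ring
  have hy1 : (0 : K) ≠ W.negY 0 0 := by rw [hneg00]; simpa using hd0
  have hy2 : d ^ 2 ≠ W.negY (-d) (d ^ 2) := by rw [hnegQ]; exact pow_ne_zero 2 hd0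
  -- slopes
  have hs1 : W.slope 0 0 0 0 = 0 := by
    rw [slope_of_Y_ne rfl hy1, hneg00, ha1, ha2, ha4]
    simp
  have hs2 : W.slope (-d) (-d) (d ^ 2) (d ^ 2) = -d := by
    rw [slope_of_Y_ne rfl hy2, hnegQ, ha1, ha2, ha4]
    field_simp
    ring
  -- doubling P
  have hx1 : W.addX 0 0 (W.slope 0 0 0 0) = -d := by
    rw [hs1]; simp [WeierstrassCurve.Affine.addX, ha1, ha2]
  have hyv1 : W.addY 0 0 0 (W.slope 0 0 0 0) = d ^ 2 := by
    rw [hs1]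
    simp [WeierstrassCurve.Affine.addY, WeierstrassCurve.Affine.negAddY,
      WeierstrassCurve.Affine.addX, WeierstrassCurve.Affine.negY, ha1, ha2, ha3]
    ring
  have hdouble : 2 • (Point.some _ _ h00) = Point.some _ _ h2 := by
    rw [two_smul, Point.add_self_of_Y_ne hy1]
    exact some_eq_some' _ hx1 hyv1 h2
  -- doubling Q gives (0, -d)
  have hx2 : W.addX (-d) (-d) (W.slope (-d) (-d) (d ^ 2) (d ^ 2)) = 0 := by
    rw [hs2]; simp [WeierstrassCurve.Affine.addX, ha1, ha2]; ring
  have hyv2 : W.addY (-d) (-d) (d ^ 2) (W.slope (-d) (-d) (d ^ 2) (d ^ 2)) = -d := by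
    rw [hs2]
    simp [WeierstrassCurve.Affine.addY, WeierstrassCurve.Affine.negAddY,
      WeierstrassCurve.Affine.addX, WeierstrassCurve.Affine.negY, ha1, ha2, ha3]
    ring
  have h4 : W.Nonsingular 0 (-d) := by
    have := nonsingular_add h2 h2 (fun h => hy2 h.2)
    rwa [hx2, hyv2] at this
  have hquad : 2 • (Point.some _ _ h2) = Point.some _ _ h4 := by
    rw [two_smul, Point.add_self_of_Y_ne hy2]
    exact some_eq_some' _ hx2 hyv2 h4
  have h5 : 5 • (Point.some _ _ h00) = 0 := by
    have : (5 : ℕ) • (Point.some _ _ h00) = 2 • (2 • (Point.some _ _ h00)) + Point.some _ _ h00 := by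
      rw [smul_smul]
      norm_num
      exact succ_nsmul _ 4
    rw [this, hdouble, hquad, Point.add_of_Y_eq rfl hneg00.symm]
  refine ⟨hdouble, ?_⟩
  haveI : Fact (Nat.Prime 5) := ⟨by norm_num⟩
  exact addOrderOf_eq_prime h5 (Point.some_ne_zero h00)
end

section
/- Let K be a field and d ∈ K with d(d^2 + 11d - 1) ≠ 0. On the elliptic curve E_d : y^2 + (d+1)xy + dy = x^3 + dx^2, the subgroup generated by (0,0) consists of the five points O, (0,0), (-d, d^2), (-d, 0), (0, -d). -/
open WeierstrassCurve.Affine WeierstrassCurve.Affine.Point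

lemma aux_some_eq {F : Type*} [Field F] {W : WeierstrassCurve.Affine F} {x₁ y₁ x₂ y₂ : F}
    (h₁ : W.Nonsingular x₁ y₁) (h₂ : W.Nonsingular x₂ y₂) (hx : x₁ = x₂) (hy : y₁ = y₂) :
    Point.some _ _ h₁ = Point.some _ _ h₂ := by subst hx hy; rfl

open Classical in
theorem stmt_5 {K : Type*} [Field K] (d : K) (hd : d * (d ^ 2 + 11 * d - 1) ≠ 0)
    (E : WeierstrassCurve.Affine K) (hE : E = ⟨d + 1, d, d, 0, 0⟩)
    (h1 : E.Nonsingular 0 0) (h2 : E.Nonsingular (-d) (d ^ 2))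
    (h3 : E.Nonsingular (-d) 0) (h4 : E.Nonsingular 0 (-d)) :
    (AddSubgroup.zmultiples (WeierstrassCurve.Affine.Point.some _ _ h1) : Set E.Point) =
      {0, WeierstrassCurve.Affine.Point.some _ _ h1, WeierstrassCurve.Affine.Point.some _ _ h2,
        WeierstrassCurve.Affine.Point.some _ _ h3, WeierstrassCurve.Affine.Point.some _ _ h4} := by
  have hd0 : d ≠ 0 := left_ne_zero_of_mul hd
  rename' E => W
  have ha1 : W.a₁ = d + 1 := by rw [hE]
  have ha2 : W.a₂ = d := by rw [hE]
  have ha3 : W.a₃ = d := by rw [hE]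
  have ha4 : W.a₄ = 0 := by rw [hE]
  -- 2P
  have hy1 : (0 : K) ≠ W.negY 0 0 := by
    simp [negY, ha1, ha3]
    exact hd0
  have e2 : Point.some _ _ h1 + Point.some _ _ h1 = Point.some _ _ h2 := by
    rw [add_self_of_Y_ne hy1]
    have hs : W.slope 0 0 0 0 = 0 := by
      rw [slope_of_Y_ne rfl hy1]
      simp [ha1, ha2, ha3, ha4]
    apply aux_some_eq
    · simp [addX, hs, ha1, ha2]
    · simp [WeierstrassCurve.Affine.addY, negAddY, addX, negY, hs, ha1, ha2, ha3]
      ring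
  -- 3P
  have hx12 : (0 : K) ≠ -d := by simpa using hd0
  have e3 : Point.some _ _ h1 + Point.some _ _ h2 = Point.some _ _ h3 := by
    rw [add_of_X_ne hx12]
    have hs : W.slope 0 (-d) 0 (d ^ 2) = -d := by
      rw [slope_of_X_ne hx12]
      field_simp
      ring
    apply aux_some_eq
    · simp [addX, hs, ha1, ha2]; ring
    · simp [WeierstrassCurve.Affine.addY, negAddY, addX, negY, hs, ha1, ha2, ha3]
      ring
  -- 4P
  have e4 : Point.some _ _ h1 + Point.some _ _ h3 = Point.some _ _ h4 := by
    rw [add_of_X_ne hx12]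
    have hs : W.slope 0 (-d) 0 0 = 0 := by
      rw [slope_of_X_ne hx12]; simp
    apply aux_some_eq
    · simp [addX, hs, ha1, ha2]
    · simp [WeierstrassCurve.Affine.addY, negAddY, addX, negY, hs, ha1, ha2, ha3]
  -- 5P = 0
  have e5 : Point.some _ _ h1 + Point.some _ _ h4 = 0 := by
    apply add_of_Y_eq rfl
    simp [negY, ha1, ha3]
  set P : W.Point := Point.some _ _ h1 with hP
  have s2 : (2 : ℤ) • P = Point.some _ _ h2 := by rw [two_zsmul]; exact e2
  have s3 : (3 : ℤ) • P = Point.some _ _ h3 := by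
    rw [show (3 : ℤ) = 1 + 2 by norm_num, add_zsmul, one_zsmul, s2]; exact e3
  have s4 : (4 : ℤ) • P = Point.some _ _ h4 := by
    rw [show (4 : ℤ) = 1 + 3 by norm_num, add_zsmul, one_zsmul, s3]; exact e4
  have s5 : (5 : ℤ) • P = 0 := by
    rw [show (5 : ℤ) = 1 + 4 by norm_num, add_zsmul, one_zsmul, s4]; rw [e5]
  ext z
  simp only [SetLike.mem_coe, AddSubgroup.mem_zmultiples_iff, Set.mem_insert_iff,
    Set.mem_singleton_iff]
  constructor
  · rintro ⟨n, rfl⟩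
    have key : n • P = (n % 5) • P := by
      conv_lhs => rw [← Int.mul_ediv_add_emod n 5]
      rw [add_zsmul, mul_comm, mul_zsmul, s5, smul_zero, zero_add]
    rw [key]
    have h0 : 0 ≤ n % 5 := Int.emod_nonneg n (by norm_num)
    have h5 : n % 5 < 5 := Int.emod_lt_of_pos n (by norm_num)
    set r := n % 5 with hr
    interval_cases r
    · left; simp
    · right; left; simp
    · right; right; left; exact s2
    · right; right; right; left; exact s3
    · right; right; right; right; exact s4
  · rintro (rfl | rfl | rfl | rfl | rfl)
    · exact ⟨0, by simp⟩
    · exact ⟨1, one_zsmul P⟩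
    · exact ⟨2, s2⟩
    · exact ⟨3, s3⟩
    · exact ⟨4, s4⟩
end

section
/- Let S be a finite set of prime numbers and define ℚ(S,5) = { x ∈ ℚ^×/(ℚ^×)^5 : v_p(x) ≡ 0 (mod 5) for all primes p ∉ S }. Then ℚ(S,5) is a finite group of order 5^{#S}. -/
open Finset

lemma pow5_nat (n : ℕ) (hn : n ≠ 0) (h : ∀ p : ℕ, p.Prime → (5 : ℕ) ∣ n.factorization p) :
    ∃ m : ℕ, m ^ 5 = n := by
  refine ⟨n.factorization.prod fun p k => p ^ (k / 5), ?_⟩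
  conv_rhs => rw [← Nat.factorization_prod_pow_eq_self hn]
  rw [Finsupp.prod, Finsupp.prod, ← Finset.prod_pow]
  refine Finset.prod_congr rfl fun p hp => ?_
  rw [← pow_mul]
  congr 1
  exact Nat.div_mul_cancel (h p (Nat.prime_of_mem_primeFactors (by
    rwa [← Nat.support_factorization])))

lemma pow5_int (z : ℤ) (hz : z ≠ 0) (h : ∀ p : ℕ, p.Prime → (5 : ℕ) ∣ padicValInt p z) :
    ∃ w : ℤ, w ^ 5 = z := by
  obtain ⟨m, hm⟩ := pow5_nat z.natAbs (Int.natAbs_ne_zero.mpr hz) (fun p hp => by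
    rw [Nat.factorization_def _ hp]; exact h p hp)
  rcases Int.natAbs_eq z with h1 | h1
  · exact ⟨m, by rw [h1]; exact_mod_cast congrArg (Nat.cast : ℕ → ℤ) hm⟩
  · refine ⟨-m, ?_⟩
    rw [h1]
    have h2 : ((-m:ℤ))^5 = -((m:ℤ))^5 := by ring
    rw [h2]
    exact_mod_cast congrArg (fun t : ℕ => -(t:ℤ)) hm

lemma pow5_rat (q : ℚ) (hq : q ≠ 0) (h : ∀ p : ℕ, p.Prime → (5 : ℤ) ∣ padicValRat p q) :
    ∃ s : ℚ, s ^ 5 = q := by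
  have hden : (q.den : ℤ) ≠ 0 := by exact_mod_cast q.den_nz
  have hnum : q.num ≠ 0 := Rat.num_ne_zero.mpr hq
  have hnd : ∀ p : ℕ, p.Prime → ((5:ℕ) ∣ padicValInt p q.num ∧ (5:ℕ) ∣ padicValNat p q.den) := by
    intro p hp
    have hco := q.reduced
    by_cases hd : p ∣ q.den
    · have hn : ¬ (p : ℤ) ∣ q.num := by
        intro hcon
        have : p ∣ Nat.gcd q.num.natAbs q.den :=
          Nat.dvd_gcd (Int.natAbs_dvd_natAbs.mpr (by simpa using hcon)) hd
        rw [hco] at this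
        exact hp.one_lt.ne' (Nat.dvd_one.mp this)
      have h0 : padicValInt p q.num = 0 := padicValInt.eq_zero_of_not_dvd hn
      have := h p hp
      rw [padicValRat_def, h0] at this
      constructor
      · simp [h0]
      · have : (5:ℤ) ∣ (padicValNat p q.den : ℤ) := (dvd_neg).mp (by simpa using this)
        exact_mod_cast this
    · have h0 : padicValNat p q.den = 0 := padicValNat.eq_zero_of_not_dvd hd
      have := h p hp
      rw [padicValRat_def, h0] at this
      constructor
      · have : (5:ℤ) ∣ (padicValInt p q.num : ℤ) := by simpa using this
        exact_mod_cast this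
      · simp [h0]
  obtain ⟨w, hw⟩ := pow5_int q.num hnum (fun p hp => (hnd p hp).1)
  obtain ⟨m, hm⟩ := pow5_nat q.den q.den_nz (fun p hp => by
    rw [Nat.factorization_def _ hp]; exact (hnd p hp).2)
  refine ⟨(w : ℚ) / (m : ℚ), ?_⟩
  have hm0 : (m : ℚ) ≠ 0 := by
    have : m ^ 5 ≠ 0 := hm ▸ q.den_nz
    exact_mod_cast fun h0 => this (by rw [h0]; simp)
  rw [div_pow]
  rw [show ((w:ℚ))^5 = ((w^5 : ℤ) : ℚ) by push_cast; ring,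
      show ((m:ℚ))^5 = ((m^5 : ℕ) : ℚ) by push_cast; ring, hw, hm]
  exact Rat.num_div_den q

lemma val_congr {r r' : ℚˣ}
    (h : (QuotientGroup.mk r : ℚˣ ⧸ (powMonoidHom 5 : ℚˣ →* ℚˣ).range) = QuotientGroup.mk r')
    {p : ℕ} (hp : p.Prime) :
    ((padicValRat p (r : ℚ) : ZMod 5)) = ((padicValRat p (r' : ℚ) : ZMod 5)) := by
  haveI := Fact.mk hp
  obtain ⟨u, hu⟩ := QuotientGroup.eq.mp h
  have hr' : r' = r * u ^ 5 := by
    rw [powMonoidHom_apply] at hu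
    rw [hu]; group
  have hv : (r' : ℚ) = (r : ℚ) * (u : ℚ) ^ 5 := by rw [hr']; push_cast; ring
  rw [hv, padicValRat.mul (Units.ne_zero r) (pow_ne_zero 5 (Units.ne_zero u)),
    padicValRat.pow (u : ℚ)]
  push_cast
  have h5 : (5 : ZMod 5) = 0 := by decide
  rw [h5, zero_mul, add_zero]

noncomputable def valmap (p : ℕ) (hp : p.Prime) :
    (ℚˣ ⧸ (powMonoidHom 5 : ℚˣ →* ℚˣ).range) → ZMod 5 :=
  fun x => Quotient.liftOn' x (fun r => ((padicValRat p (r : ℚ) : ZMod 5)))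
    (fun a b hab => val_congr (Quotient.sound' hab) hp)

lemma valmap_mk (p : ℕ) (hp : p.Prime) (r : ℚˣ) :
    valmap p hp (QuotientGroup.mk r) = ((padicValRat p (r : ℚ) : ZMod 5)) := rfl


/-- `ℚ(S,5)`: the subgroup of `ℚ^×/(ℚ^×)^5` of classes whose `p`-adic valuation is
divisible by `5` for all primes `p ∉ S`; it is a finite group of order `5 ^ #S`. -/
theorem stmt_14 (S : Finset ℕ) (hS : ∀ p ∈ S, p.Prime) :
    ∃ H : Subgroup (ℚˣ ⧸ (powMonoidHom 5 : ℚˣ →* ℚˣ).range),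
      (H : Set (ℚˣ ⧸ (powMonoidHom 5 : ℚˣ →* ℚˣ).range)) =
        {x | ∀ p : ℕ, p.Prime → p ∉ S →
          ∀ r : ℚˣ, (QuotientGroup.mk r : ℚˣ ⧸ (powMonoidHom 5 : ℚˣ →* ℚˣ).range) = x →
            (5 : ℤ) ∣ padicValRat p (r : ℚ)} ∧
      Nat.card H = 5 ^ S.card := by
  classical
  have dvd_iff : ∀ (p : ℕ) (a : ℤ), ((a : ZMod 5) = 0 ↔ (5 : ℤ) ∣ a) := fun p a =>
    ZMod.intCast_zmod_eq_zero_iff_dvd a 5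
  refine ⟨{ carrier := {x | ∀ p : ℕ, p.Prime → p ∉ S →
              ∀ r : ℚˣ, (QuotientGroup.mk r : ℚˣ ⧸ (powMonoidHom 5 : ℚˣ →* ℚˣ).range) = x →
                (5 : ℤ) ∣ padicValRat p (r : ℚ)},
            one_mem' := ?_,
            mul_mem' := ?_,
            inv_mem' := ?_ }, rfl, ?_⟩
  · intro a b ha hb p hp hpS r hr
    haveI := Fact.mk hp
    obtain ⟨s, rfl⟩ := QuotientGroup.mk_surjective a
    obtain ⟨t, rfl⟩ := QuotientGroup.mk_surjective b
    rw [← dvd_iff p]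
    have : (QuotientGroup.mk r : ℚˣ ⧸ (powMonoidHom 5 : ℚˣ →* ℚˣ).range)
        = QuotientGroup.mk (s * t) := by simpa using hr
    rw [val_congr this hp]
    have hst : ((s * t : ℚˣ) : ℚ) = (s : ℚ) * (t : ℚ) := by push_cast; ring
    rw [hst, padicValRat.mul (Units.ne_zero s) (Units.ne_zero t)]
    have h1 := (dvd_iff p _).mpr (ha p hp hpS s rfl)
    have h2 := (dvd_iff p _).mpr (hb p hp hpS t rfl)
    push_cast
    rw [h1, h2, add_zero]
  · intro p hp hpS r hr
    haveI := Fact.mk hp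
    rw [← dvd_iff p]
    have : (QuotientGroup.mk r : ℚˣ ⧸ (powMonoidHom 5 : ℚˣ →* ℚˣ).range)
        = QuotientGroup.mk 1 := by simpa using hr
    rw [val_congr this hp]
    simp [padicValRat.one]
  · intro a ha p hp hpS r hr
    haveI := Fact.mk hp
    obtain ⟨s, rfl⟩ := QuotientGroup.mk_surjective a
    rw [← dvd_iff p]
    have : (QuotientGroup.mk r : ℚˣ ⧸ (powMonoidHom 5 : ℚˣ →* ℚˣ).range)
        = QuotientGroup.mk s⁻¹ := by simpa using hr
    rw [val_congr this hp]
    have hsi : ((s⁻¹ : ℚˣ) : ℚ) = ((s : ℚ))⁻¹ := by push_cast; ring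
    rw [hsi, padicValRat.inv]
    have h1 := (dvd_iff p _).mpr (ha p hp hpS s rfl)
    push_cast
    rw [h1, neg_zero]
  · -- cardinality
    have hcard : Nat.card ({p // p ∈ S} → ZMod 5) = 5 ^ S.card := by
      rw [Nat.card_eq_fintype_card, Fintype.card_fun, ZMod.card, Fintype.card_coe]
    rw [← hcard]
    refine Nat.card_eq_of_bijective
      (fun x (p : {p // p ∈ S}) => valmap p.1 (hS p.1 p.2) x.1) ⟨?_, ?_⟩
    · intro x y hxy
      apply Subtype.ext
      obtain ⟨r, hr⟩ := QuotientGroup.mk_surjective x.1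
      obtain ⟨t, ht⟩ := QuotientGroup.mk_surjective y.1
      rw [← hr, ← ht]
      have hq : ((r⁻¹ * t : ℚˣ) : ℚ) ≠ 0 := Units.ne_zero _
      have hdvd : ∀ p : ℕ, p.Prime → (5 : ℤ) ∣ padicValRat p ((r⁻¹ * t : ℚˣ) : ℚ) := by
        intro p hp
        haveI := Fact.mk hp
        have hco : ((r⁻¹ * t : ℚˣ) : ℚ) = ((r : ℚ))⁻¹ * (t : ℚ) := by push_cast; ring
        have hvv : padicValRat p ((r⁻¹ * t : ℚˣ) : ℚ)
            = -padicValRat p (r : ℚ) + padicValRat p (t : ℚ) := by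
          rw [hco, padicValRat.mul (inv_ne_zero (Units.ne_zero r)) (Units.ne_zero t),
            padicValRat.inv]
        rw [← dvd_iff p, hvv]
        push_cast
        by_cases hpS : p ∈ S
        · have hpq := congrFun hxy ⟨p, hpS⟩
          simp only at hpq
          rw [← hr, ← ht, valmap_mk, valmap_mk] at hpq
          rw [hpq]
          ring
        · have e1 : ((padicValRat p (r : ℚ) : ZMod 5)) = 0 :=
            (dvd_iff p _).mpr (x.2 p hp hpS r hr)
          have e2 : ((padicValRat p (t : ℚ) : ZMod 5)) = 0 :=
            (dvd_iff p _).mpr (y.2 p hp hpS t ht)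
          rw [e1, e2]
          ring
      obtain ⟨s, hs⟩ := pow5_rat _ hq hdvd
      have hs0 : s ≠ 0 := fun h0 => hq (by rw [← hs, h0]; simp)
      refine QuotientGroup.eq.mpr ⟨Units.mk0 s hs0, ?_⟩
      apply Units.ext
      rw [powMonoidHom_apply]
      push_cast
      simpa using hs
    · intro aa
      set a' : ℕ → ℕ := fun p => if h : p ∈ S then (aa ⟨p, h⟩).val else 0 with ha'
      set N : ℕ := ∏ p ∈ S, p ^ a' p with hNdef
      have hne : ∀ p ∈ S, p ^ a' p ≠ 0 := fun p hp => pow_ne_zero _ (hS p hp).pos.ne'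
      have hN0 : N ≠ 0 := Finset.prod_ne_zero_iff.mpr hne
      have hfac : ∀ q : ℕ, N.factorization q = if q ∈ S then a' q else 0 := by
        intro q
        rw [hNdef, Nat.factorization_prod hne, Finset.sum_apply']
        have hterm : ∀ p ∈ S, ((p ^ a' p).factorization) q = if p = q then a' p else 0 :=
          fun p hp => by rw [(hS p hp).factorization_pow, Finsupp.single_apply]
        rw [Finset.sum_congr rfl hterm, Finset.sum_ite_eq' S q a']
      have hval : ∀ q : ℕ, q.Prime →
          padicValRat q ((N : ℕ) : ℚ) = ((if q ∈ S then a' q else 0 : ℕ) : ℤ) := by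
        intro q hq
        haveI := Fact.mk hq
        rw [padicValRat.of_nat, ← Nat.factorization_def N hq, hfac q]
      have hNQ : ((N : ℕ) : ℚ) ≠ 0 := Nat.cast_ne_zero.mpr hN0
      refine ⟨⟨QuotientGroup.mk (Units.mk0 ((N : ℕ) : ℚ) hNQ), ?_⟩, ?_⟩
      · intro p hp hpS r hr
        haveI := Fact.mk hp
        rw [← dvd_iff p, val_congr hr hp]
        rw [show ((Units.mk0 ((N : ℕ) : ℚ) hNQ : ℚˣ) : ℚ) = ((N : ℕ) : ℚ) from rfl,
          hval p hp, if_neg hpS]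
        simp
      · funext p
        simp only
        rw [valmap_mk,
          show ((Units.mk0 ((N : ℕ) : ℚ) hNQ : ℚˣ) : ℚ) = ((N : ℕ) : ℚ) from rfl,
          hval p.1 (hS p.1 p.2), if_pos p.2, ha']
        simp only [dif_pos p.2]
        push_cast
        rw [ZMod.natCast_val, ZMod.cast_id]
end
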